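/- Let G be a finite group of order n and let k be an odd positive integer. Then there exists a constant c = c(G,k) > 0 such that Per_k(S_d(G)) / ((k·n)!/(k!)^n)^{d-2} tends to c as d → ∞ along the set of those d for which Per_k(S_d(G)) is nonzero, and per_k(S_d(G)) / ((k·n)!/(k!)^n)^{d-2} tends to the same constant c along the set of those d for which per_k(S_d(G)) is nonzero. -/

import Mathlib

/-- `SdG G d` is the support `S_d(G)` of the `d`-dimensional MDS code of the
`(d-1)`-iterated group `G`: the set of `(x₁, …, x_d) ∈ G^d` with
`x₁ · x₂ · ⋯ · x_d = 1`. -/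
def SdG (G : Type*) [Monoid G] (d : ℕ) : Set (Fin d → G) :=
  {x | (List.ofFn x).prod = 1}

/-- `IsKMultiplexG S k K` says that the multiset `K` is a `k`-multiplex over
`S ⊆ G^d`: it consists of `k·|G|` elements of `S` and, for every coordinate `j` and
every element `v ∈ G`, exactly `k` elements of `K` (counted with multiplicity) have
`j`-th coordinate equal to `v`. -/
def IsKMultiplexG {G : Type*} [Fintype G] [DecidableEq G] {d : ℕ}
    (S : Set (Fin d → G)) (k : ℕ) (K : Multiset (Fin d → G)) : Prop :=
  Multiset.card K = k * Fintype.card G ∧ (∀ x ∈ K, x ∈ S) ∧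
    ∀ (j : Fin d) (v : G), Multiset.card (K.filter (fun x => x j = v)) = k

/-- `PerkG S k` is the number of `k`-multiplexes over `S` (the `k`-multipermanent). -/
noncomputable def PerkG {G : Type*} [Fintype G] [DecidableEq G] {d : ℕ}
    (S : Set (Fin d → G)) (k : ℕ) : ℕ :=
  Set.ncard {K : Multiset (Fin d → G) | IsKMultiplexG S k K}

/-- `perkG S k` is the number of `k`-plexes in `S` (`k`-multiplexes without repeated
elements), i.e. the `k`-permanent. -/
noncomputable def perkG {G : Type*} [Fintype G] [DecidableEq G] {d : ℕ}
    (S : Set (Fin d → G)) (k : ℕ) : ℕ :=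
  Set.ncard {K : Multiset (Fin d → G) | K.Nodup ∧ IsKMultiplexG S k K}

namespace IterAux

open Finset Filter Matrix

/-! ### Abstract random walk on a finite group -/

section Walk

variable {H : Type*} [Group H] [Fintype H] [DecidableEq H]

/-- Number of words of length `d` from `R` with product `h`. -/
def pc (R : Finset H) : ℕ → H → ℕ
  | 0, h => if h = 1 then 1 else 0
  | d + 1, h => ∑ s ∈ R, pc R d (h * s⁻¹)

lemma pc_exists_word {R : Finset H} : ∀ {d : ℕ} {h : H}, pc R d h ≠ 0 →
    ∃ L : List H, L.length = d ∧ (∀ s ∈ L, s ∈ R) ∧ L.prod = h := by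
  intro d
  induction d with
  | zero =>
    intro h hh
    have h1 : h = 1 := by
      by_contra hne
      simp [pc, hne] at hh
    exact ⟨[], rfl, by simp, by simp [h1]⟩
  | succ d ih =>
    intro h hh
    have : ∃ s ∈ R, pc R d (h * s⁻¹) ≠ 0 := by
      by_contra hc
      push_neg at hc
      have : pc R (d+1) h = 0 := by
        simp only [pc]
        exact Finset.sum_eq_zero hc
      exact hh this
    obtain ⟨s, hs, hps⟩ := this
    obtain ⟨L, hlen, hmem, hprod⟩ := ih hps
    refine ⟨L ++ [s], by simp [hlen], ?_, ?_⟩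
    · intro t ht
      rcases List.mem_append.1 ht with h1 | h2
      · exact hmem t h1
      · simp at h2; subst h2; exact hs
    · simp [hprod]

/-- Transition matrix of the walk with steps in `R`. -/
noncomputable def Qm (R : Finset H) : Matrix H H ℝ :=
  Matrix.of fun g h => if g⁻¹ * h ∈ R then (R.card : ℝ)⁻¹ else 0

lemma Qm_nonneg (R : Finset H) (g h : H) : 0 ≤ Qm R g h := by
  unfold Qm
  simp only [Matrix.of_apply]
  split <;> positivity

lemma Qm_rowsum (R : Finset H) (hne : R.Nonempty) (g : H) :
    ∑ h, Qm R g h = 1 := by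
  have hcard : (R.card : ℝ) ≠ 0 := by
    exact_mod_cast Finset.card_ne_zero_of_mem hne.choose_spec
  have h1 : ∑ h, Qm R g h = ∑ h : H, (if h ∈ R then (R.card : ℝ)⁻¹ else 0) := by
    apply Fintype.sum_equiv (Equiv.mulLeft g⁻¹)
    intro s
    unfold Qm
    simp [Equiv.mulLeft]
  rw [h1, Finset.sum_ite_mem, Finset.univ_inter, Finset.sum_const, nsmul_eq_mul,
    mul_inv_cancel₀ hcard]

lemma Qm_herm (R : Finset H) (hsym : ∀ s ∈ R, s⁻¹ ∈ R) : (Qm R).IsHermitian := by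
  refine Matrix.IsHermitian.ext ?_
  intro i j
  have key : ∀ a b : H, a⁻¹ * b ∈ R → b⁻¹ * a ∈ R := by
    intro a b hab
    have := hsym _ hab
    simpa [_root_.mul_inv_rev] using this
  unfold Qm
  simp only [Matrix.of_apply, star_trivial]
  by_cases hij : j⁻¹ * i ∈ R
  · rw [if_pos hij, if_pos (key _ _ hij)]
  · rw [if_neg hij, if_neg (fun hc => hij (key _ _ hc))]

lemma Qm_pow (R : Finset H) (hne : R.Nonempty) (d : ℕ) (g h : H) :
    (Qm R ^ d) g h = (pc R d (g⁻¹ * h) : ℝ) / (R.card : ℝ) ^ d := by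
  have hcard : (R.card : ℝ) ≠ 0 := by
    exact_mod_cast Finset.card_ne_zero_of_mem hne.choose_spec
  induction d generalizing g h with
  | zero =>
    simp only [pow_zero, Matrix.one_apply, pc, inv_mul_eq_one]
    by_cases hgh : g = h
    · simp [hgh]
    · simp [hgh]
  | succ d ih =>
    rw [pow_succ, Matrix.mul_apply]
    have step1 : ∀ m : H, (Qm R ^ d) g m * Qm R m h
        = (pc R d (g⁻¹ * m) : ℝ) / (R.card : ℝ) ^ d
          * (if m⁻¹ * h ∈ R then (R.card : ℝ)⁻¹ else 0) := by
      intro m; rw [ih]; rfl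
    simp only [step1]
    have step2 : ∑ m : H, (pc R d (g⁻¹ * m) : ℝ) / (R.card : ℝ) ^ d
          * (if m⁻¹ * h ∈ R then (R.card : ℝ)⁻¹ else 0)
        = ∑ s : H, (pc R d (g⁻¹ * (h * s⁻¹)) : ℝ) / (R.card : ℝ) ^ d
          * (if s ∈ R then (R.card : ℝ)⁻¹ else 0) := by
      refine (Fintype.sum_equiv ((Equiv.inv H).trans (Equiv.mulLeft h)) _ _ ?_).symm
      intro s
      have h1 : (h * s⁻¹)⁻¹ * h = s := by group
      simp [Equiv.mulLeft, h1]
    rw [step2]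
    have step3 : ∑ s : H, (pc R d (g⁻¹ * (h * s⁻¹)) : ℝ) / (R.card : ℝ) ^ d
          * (if s ∈ R then (R.card : ℝ)⁻¹ else 0)
        = ∑ s ∈ R, (pc R d (g⁻¹ * h * s⁻¹) : ℝ) / (R.card : ℝ) ^ (d + 1) := by
      rw [← Finset.sum_filter_add_sum_filter_not Finset.univ (fun s => s ∈ R)]
      have hz : ∑ s ∈ Finset.univ.filter (fun s => ¬ s ∈ R),
          (pc R d (g⁻¹ * (h * s⁻¹)) : ℝ) / (R.card : ℝ) ^ d
          * (if s ∈ R then (R.card : ℝ)⁻¹ else 0) = 0 := by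
        apply Finset.sum_eq_zero
        intro s hs
        simp only [Finset.mem_filter] at hs
        simp [hs.2]
      rw [hz, add_zero]
      rw [Finset.filter_mem_eq_inter, Finset.univ_inter]
      apply Finset.sum_congr rfl
      intro s hs
      rw [if_pos hs, ← mul_assoc g⁻¹ h s⁻¹, pow_succ]
      field_simp
    rw [step3]
    show _ = (pc R (d+1) (g⁻¹ * h) : ℝ) / _
    simp only [pc]
    push_cast
    rw [Finset.sum_div]

lemma Qm_mulVec_ones (R : Finset H) (hne : R.Nonempty) :
    Qm R *ᵥ (fun _ => (1 : ℝ)) = fun _ => 1 := by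
  funext g
  have := Qm_rowsum R hne g
  simpa [Matrix.mulVec, dotProduct] using this

lemma Qm_mulVec_apply (R : Finset H) (v : H → ℝ) (g : H) :
    (Qm R *ᵥ v) g = ∑ s ∈ R, (R.card : ℝ)⁻¹ * v (g * s) := by
  have h1 : (Qm R *ᵥ v) g = ∑ h : H, (if h ∈ R then (R.card : ℝ)⁻¹ else 0) * v (g * h) := by
    rw [Matrix.mulVec, dotProduct]
    apply Fintype.sum_equiv (Equiv.mulLeft g⁻¹)
    intro s
    unfold Qm
    simp [Equiv.mulLeft, mul_inv_cancel_left]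
  rw [h1]
  rw [← Finset.sum_filter_add_sum_filter_not Finset.univ (fun s => s ∈ R)]
  have hz : ∑ s ∈ Finset.univ.filter (fun s => ¬ s ∈ R),
      (if s ∈ R then (R.card : ℝ)⁻¹ else 0) * v (g * s) = 0 := by
    apply Finset.sum_eq_zero
    intro s hs
    simp only [Finset.mem_filter] at hs
    simp [hs.2]
  rw [hz, add_zero, Finset.filter_mem_eq_inter, Finset.univ_inter]
  apply Finset.sum_congr rfl
  intro s hs
  rw [if_pos hs]

lemma eig_abs_le (R : Finset H) (hne : R.Nonempty) {μ : ℝ} {v : H → ℝ}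
    (hv : v ≠ 0) (heq : Qm R *ᵥ v = μ • v) : |μ| ≤ 1 := by
  obtain ⟨x₀, -, hx₀⟩ := Finset.exists_max_image Finset.univ (fun x => |v x|)
    ⟨1, Finset.mem_univ _⟩
  have hM : 0 < |v x₀| := by
    obtain ⟨y, hy⟩ : ∃ y, v y ≠ 0 := by
      by_contra hc; push_neg at hc; exact hv (funext hc)
    calc 0 < |v y| := abs_pos.2 hy
    _ ≤ |v x₀| := hx₀ y (Finset.mem_univ _)
  have hcardpos : (0:ℝ) < R.card := by
    exact_mod_cast Finset.card_pos.2 hne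
  have key : |μ| * |v x₀| ≤ 1 * |v x₀| := by
    rw [one_mul, ← abs_mul]
    have h1 : μ * v x₀ = (Qm R *ᵥ v) x₀ := by rw [heq]; rfl
    rw [h1, Qm_mulVec_apply]
    calc |∑ s ∈ R, (R.card : ℝ)⁻¹ * v (x₀ * s)|
        ≤ ∑ s ∈ R, |(R.card : ℝ)⁻¹ * v (x₀ * s)| := Finset.abs_sum_le_sum_abs _ _
      _ ≤ ∑ s ∈ R, (R.card : ℝ)⁻¹ * |v x₀| := by
          apply Finset.sum_le_sum
          intro s hs
          rw [abs_mul, abs_of_nonneg (by positivity : (0:ℝ) ≤ (R.card : ℝ)⁻¹)]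
          exact mul_le_mul_of_nonneg_left (hx₀ _ (Finset.mem_univ _)) (by positivity)
      _ = |v x₀| := by
          rw [Finset.sum_const, nsmul_eq_mul, ← mul_assoc,
            mul_inv_cancel₀ (ne_of_gt hcardpos), one_mul]
  exact le_of_mul_le_mul_right key hM

lemma eig_ne_neg_one (R : Finset H) (hne : R.Nonempty)
    (hodd : ∃ m, Odd m ∧ pc R m 1 ≠ 0) {μ : ℝ} {v : H → ℝ}
    (hv : v ≠ 0) (heq : Qm R *ᵥ v = μ • v) : μ ≠ -1 := by
  intro hμ
  subst hμ
  obtain ⟨x₀, -, hx₀⟩ := Finset.exists_max_image Finset.univ (fun x => |v x|)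
    ⟨1, Finset.mem_univ _⟩
  set M := |v x₀| with hMdef
  have hM : 0 < M := by
    obtain ⟨y, hy⟩ : ∃ y, v y ≠ 0 := by
      by_contra hc; push_neg at hc; exact hv (funext hc)
    calc 0 < |v y| := abs_pos.2 hy
    _ ≤ M := hx₀ y (Finset.mem_univ _)
  have hcard : (R.card : ℝ) ≠ 0 := by
    have : (0:ℝ) < R.card := by exact_mod_cast Finset.card_pos.2 hne
    exact ne_of_gt this
  -- substep, for any vector w with the same properties
  have substep : ∀ w : H → ℝ, (Qm R *ᵥ w) = (-1 : ℝ) • w → (∀ h, |w h| ≤ M) →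
      ∀ g, w g = M → ∀ s ∈ R, w (g * s) = -M := by
    intro w hw hbd g hg s hs
    have hsum : ∑ t ∈ R, (R.card : ℝ)⁻¹ * w (g * t) = -M := by
      have := congrFun hw g
      rw [Qm_mulVec_apply] at this
      rw [this]
      simp [hg]
    have hsum2 : ∑ t ∈ R, (M + w (g * t)) = 0 := by
      have h2 : ∑ t ∈ R, w (g * t) = -M * R.card := by
        have h3 : ∑ t ∈ R, (R.card : ℝ)⁻¹ * w (g * t)
            = (R.card : ℝ)⁻¹ * ∑ t ∈ R, w (g * t) := by
          rw [Finset.mul_sum]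
        rw [h3] at hsum
        field_simp at hsum
        linarith [hsum]
      rw [Finset.sum_add_distrib, h2, Finset.sum_const, nsmul_eq_mul, mul_comm]
      ring
    have hterm : ∀ t ∈ R, 0 ≤ M + w (g * t) := by
      intro t ht
      have := (abs_le.1 (hbd (g * t))).1
      linarith
    have := (Finset.sum_eq_zero_iff_of_nonneg hterm).1 hsum2 s hs
    linarith
  have step : ∀ g, |v g| = M → ∀ s ∈ R, v (g * s) = - v g ∧ |v (g * s)| = M := by
    intro g hg s hs
    rcases abs_eq (le_of_lt hM) |>.1 hg with h1 | h1
    · have := substep v heq (fun h => hx₀ h (Finset.mem_univ _)) g h1 s hs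
      constructor
      · rw [this, h1]
      · rw [this, abs_neg, abs_of_pos hM]
    · have hw : (Qm R *ᵥ (-v)) = (-1 : ℝ) • (-v) := by
        rw [Matrix.mulVec_neg, heq]
        ext h
        simp
      have hbd : ∀ h, |(-v) h| ≤ M := by
        intro h; rw [Pi.neg_apply, abs_neg]; exact hx₀ h (Finset.mem_univ _)
      have hgv : (-v) g = M := by rw [Pi.neg_apply, h1]; ring
      have := substep (-v) hw hbd g hgv s hs
      rw [Pi.neg_apply] at this
      constructor
      · have : v (g * s) = M := by linarith
        rw [this, h1]; ring
      · have : v (g * s) = M := by linarith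
        rw [this, abs_of_pos hM]
  have word : ∀ L : List H, (∀ s ∈ L, s ∈ R) → ∀ g, |v g| = M →
      v (g * L.prod) = (-1 : ℝ) ^ L.length * v g := by
    intro L
    induction L with
    | nil => intro _ g _; simp
    | cons s L ih =>
      intro hmem g hg
      have hs : s ∈ R := hmem s List.mem_cons_self
      obtain ⟨h1, h2⟩ := step g hg s hs
      have := ih (fun t ht => hmem t (List.mem_cons_of_mem _ ht)) (g * s) h2
      rw [List.prod_cons, ← mul_assoc, this, h1]
      rw [List.length_cons, pow_succ]
      ring
  obtain ⟨m, hmodd, hmne⟩ := hodd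
  obtain ⟨L, hlen, hmem, hprod⟩ := pc_exists_word hmne
  have := word L hmem x₀ rfl
  rw [hprod, mul_one, hlen, Odd.neg_one_pow hmodd] at this
  have hvx : v x₀ = 0 := by linarith
  rw [hMdef, hvx, abs_zero] at hM
  exact lt_irrefl _ hM

/-- Main abstract result: normalized return counts converge to a positive limit
along the set where they are nonzero. -/
theorem walk_limit (R : Finset H) (hne : R.Nonempty) (hsym : ∀ s ∈ R, s⁻¹ ∈ R) :
    ∃ L : ℝ, 0 < L ∧ Tendsto (fun d : ℕ => (pc R d 1 : ℝ) / (R.card : ℝ) ^ d)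
      (atTop ⊓ 𝓟 {d : ℕ | pc R d 1 ≠ 0}) (nhds L) := by
  classical
  have hQh := Qm_herm R hsym
  set U : Matrix H H ℝ := (Matrix.IsHermitian.eigenvectorUnitary hQh : Matrix H H ℝ) with hU
  set lam : H → ℝ := hQh.eigenvalues with hlam
  set w : H → ℝ := fun i => (U 1 i) ^ 2 with hw
  have hw0 : ∀ i, 0 ≤ w i := fun i => sq_nonneg _
  have hUstar : U * star U = 1 :=
    (Matrix.mem_unitaryGroup_iff).mp (Matrix.IsHermitian.eigenvectorUnitary hQh).2
  have hUstar' : star U * U = 1 :=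
    (Matrix.mem_unitaryGroup_iff').mp (Matrix.IsHermitian.eigenvectorUnitary hQh).2
  have hQspec : Qm R = U * Matrix.diagonal lam * star U := by
    have h := hQh.spectral_theorem
    have h2 : (RCLike.ofReal ∘ hQh.eigenvalues : H → ℝ) = lam := by
      funext i; simp [hlam]
    rw [h2] at h
    exact h
  have hQpow : ∀ d : ℕ, Qm R ^ d = U * Matrix.diagonal (fun i => lam i ^ d) * star U := by
    intro d
    induction d with
    | zero =>
      have : Matrix.diagonal (fun i : H => lam i ^ 0) = (1 : Matrix H H ℝ) := by
        simp [Matrix.diagonal_one]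
      rw [pow_zero, this, Matrix.mul_one, hUstar]
    | succ d ih =>
      rw [pow_succ, ih, hQspec]
      have : Matrix.diagonal (fun i => lam i ^ d) * Matrix.diagonal lam
          = Matrix.diagonal (fun i => lam i ^ (d + 1)) := by
        simp [Matrix.diagonal_mul_diagonal, pow_succ]
      calc U * Matrix.diagonal (fun i => lam i ^ d) * star U * (U * Matrix.diagonal lam * star U)
          = U * Matrix.diagonal (fun i => lam i ^ d) * (star U * U) * Matrix.diagonal lam
            * star U := by
            simp only [Matrix.mul_assoc]
        _ = U * (Matrix.diagonal (fun i => lam i ^ d) * Matrix.diagonal lam) * star U := by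
            rw [hUstar']
            simp only [Matrix.mul_one, Matrix.mul_assoc]
        _ = U * Matrix.diagonal (fun i => lam i ^ (d + 1)) * star U := by rw [this]
  have hqd : ∀ d : ℕ, (pc R d 1 : ℝ) / (R.card : ℝ) ^ d = ∑ i, w i * lam i ^ d := by
    intro d
    have h1 : (Qm R ^ d) 1 1 = (pc R d 1 : ℝ) / (R.card : ℝ) ^ d := by
      have := Qm_pow R hne d 1 1
      simpa using this
    rw [← h1, hQpow d, Matrix.mul_apply]
    apply Finset.sum_congr rfl
    intro j _
    rw [Matrix.mul_diagonal, Matrix.star_apply, star_trivial, hw]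
    ring
  have heig : ∀ i : H, Qm R *ᵥ ⇑(hQh.eigenvectorBasis i) = lam i • ⇑(hQh.eigenvectorBasis i) :=
    fun i => hQh.mulVec_eigenvectorBasis i
  have hv0 : ∀ i : H, (⇑(hQh.eigenvectorBasis i) : H → ℝ) ≠ 0 := by
    intro i hzero
    have hnorm := hQh.eigenvectorBasis.orthonormal.1 i
    have hbz : hQh.eigenvectorBasis i = 0 := by
      ext x
      exact congrFun hzero x
    rw [hbz, norm_zero] at hnorm
    norm_num at hnorm
  have habs : ∀ i, |lam i| ≤ 1 := fun i => eig_abs_le R hne (hv0 i) (heig i)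
  -- positivity input
  set cv : H → ℝ := (star U) *ᵥ (fun _ => (1 : ℝ)) with hcv
  have hUc : U *ᵥ cv = (fun _ => (1 : ℝ)) := by
    rw [hcv, Matrix.mulVec_mulVec, hUstar, Matrix.one_mulVec]
  have hDc : ∀ i, lam i * cv i = cv i := by
    have h2 := Qm_mulVec_ones R hne
    rw [hQspec] at h2
    have h3 := congrArg (fun z => (star U) *ᵥ z) h2
    simp only at h3
    rw [← Matrix.mulVec_mulVec] at h3
    have h5 : Matrix.diagonal lam *ᵥ cv = cv := by
      rw [hcv]
      have hmm : (star U) * (U * Matrix.diagonal lam * star U)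
          = Matrix.diagonal lam * star U := by
        rw [← Matrix.mul_assoc, ← Matrix.mul_assoc, hUstar', Matrix.one_mul]
      calc Matrix.diagonal lam *ᵥ ((star U) *ᵥ (fun _ => (1:ℝ)))
          = (Matrix.diagonal lam * star U) *ᵥ (fun _ => (1:ℝ)) := by
            rw [Matrix.mulVec_mulVec]
        _ = ((star U) * (U * Matrix.diagonal lam * star U)) *ᵥ (fun _ => (1:ℝ)) := by
            rw [hmm]
        _ = (star U) *ᵥ ((U * Matrix.diagonal lam * star U) *ᵥ (fun _ => (1:ℝ))) := by
            rw [Matrix.mulVec_mulVec]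
        _ = (star U) *ᵥ (fun _ => (1:ℝ)) := by rw [h2]
    intro i
    have := congrFun h5 i
    rw [Matrix.mulVec_diagonal] at this
    exact this
  have hcz : ∀ i, lam i ≠ 1 → cv i = 0 := by
    intro i hi
    have h6 : (lam i - 1) * cv i = 0 := by
      have := hDc i
      ring_nf
      ring_nf at this
      linarith [this]
    rcases mul_eq_zero.1 h6 with h7 | h7
    · exact absurd (by linarith : lam i = 1) hi
    · exact h7
  set S1 : Finset H := Finset.univ.filter (fun i => lam i = 1) with hS1
  set S1' : Finset H := Finset.univ.filter (fun i => lam i = 1 ∨ lam i = -1) with hS1'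
  set L1 : ℝ := ∑ i ∈ S1, w i with hL1
  set L2 : ℝ := ∑ i ∈ S1', w i with hL2
  have hone : (1 : ℝ) = ∑ i ∈ S1, U 1 i * cv i := by
    have h6 : (1 : ℝ) = (U *ᵥ cv) 1 := by rw [hUc]
    rw [Matrix.mulVec, dotProduct] at h6
    rw [h6]
    refine (Finset.sum_subset (Finset.subset_univ S1) ?_).symm
    intro x _ hx
    have : lam x ≠ 1 := by
      intro hc
      exact hx (Finset.mem_filter.2 ⟨Finset.mem_univ _, hc⟩)
    rw [hcz x this, mul_zero]
  have hsumc : ∑ i, (cv i) ^ 2 = (Fintype.card H : ℝ) := by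
    have hcvi : ∀ i, cv i = ∑ a, U a i := by
      intro i
      rw [hcv]
      simp [Matrix.mulVec, dotProduct, Matrix.star_apply]
    have h7 : ∀ i, (cv i) ^ 2 = ∑ a, ∑ b, U a i * U b i := by
      intro i
      rw [hcvi, sq, Finset.sum_mul_sum]
    calc ∑ i, (cv i) ^ 2 = ∑ i : H, ∑ a : H, ∑ b : H, (U a i * U b i) := by
          simp only [h7]
      _ = ∑ a : H, ∑ b : H, ∑ i : H, (U a i * U b i) := by
          rw [Finset.sum_comm]
          apply Finset.sum_congr rfl
          intro a _
          rw [Finset.sum_comm]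
      _ = ∑ a : H, ∑ b : H, (1 : Matrix H H ℝ) a b := by
          apply Finset.sum_congr rfl
          intro a _
          apply Finset.sum_congr rfl
          intro b _
          rw [← hUstar, Matrix.mul_apply]
          apply Finset.sum_congr rfl
          intro i _
          rw [Matrix.star_apply, star_trivial]
      _ = (Fintype.card H : ℝ) := by
          simp [Matrix.one_apply]
  have hL1pos : 0 < L1 := by
    have hcs : (∑ i ∈ S1, U 1 i * cv i) ^ 2 ≤ (∑ i ∈ S1, (U 1 i) ^ 2) * ∑ i ∈ S1, (cv i) ^ 2 :=
      Finset.sum_mul_sq_le_sq_mul_sq S1 _ _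
    have h9 : (∑ i ∈ S1, (cv i) ^ 2) ≤ (Fintype.card H : ℝ) := by
      rw [← hsumc]
      exact Finset.sum_le_sum_of_subset_of_nonneg (Finset.subset_univ S1)
        (fun i _ _ => sq_nonneg _)
    have h10 : (1 : ℝ) ≤ L1 * (Fintype.card H : ℝ) := by
      calc (1 : ℝ) = (∑ i ∈ S1, U 1 i * cv i) ^ 2 := by rw [← hone]; norm_num
        _ ≤ (∑ i ∈ S1, (U 1 i) ^ 2) * ∑ i ∈ S1, (cv i) ^ 2 := hcs
        _ ≤ L1 * (Fintype.card H : ℝ) := by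
            apply mul_le_mul_of_nonneg_left h9
            exact Finset.sum_nonneg fun i _ => sq_nonneg _
    by_contra hc
    push_neg at hc
    have hcard : (0:ℝ) ≤ (Fintype.card H : ℝ) := by positivity
    nlinarith
  have hL12 : L1 ≤ L2 := by
    apply Finset.sum_le_sum_of_subset_of_nonneg
    · intro i hi
      rw [hS1'] at *
      rw [Finset.mem_filter] at hi ⊢
      exact ⟨hi.1, Or.inl hi.2⟩
    · exact fun i _ _ => hw0 i
  -- tendsto of the strictly-contracting part
  have hrest : ∀ (s : Finset H), (∀ i ∈ s, |lam i| < 1) →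
      Tendsto (fun d : ℕ => ∑ i ∈ s, w i * lam i ^ d) atTop (nhds 0) := by
    intro s hs
    have : Tendsto (fun d : ℕ => ∑ i ∈ s, w i * lam i ^ d) atTop
        (nhds (∑ i ∈ s, 0)) := by
      apply tendsto_finset_sum
      intro i hi
      have h0 : Tendsto (fun d : ℕ => lam i ^ d) atTop (nhds 0) :=
        tendsto_pow_atTop_nhds_zero_of_abs_lt_one (hs i hi)
      simpa using h0.const_mul (w i)
    simpa using this
  by_cases hodd : ∃ m, Odd m ∧ pc R m 1 ≠ 0
  · -- aperiodic case
    have hm1 : ∀ i, lam i ≠ -1 := fun i => eig_ne_neg_one R hne hodd (hv0 i) (heig i)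
    have hlt : ∀ i ∈ Finset.univ.filter (fun i => ¬ lam i = 1), |lam i| < 1 := by
      intro i hi
      rw [Finset.mem_filter] at hi
      rcases lt_or_eq_of_le (habs i) with h | h
      · exact h
      · rcases (abs_eq (by norm_num : (0:ℝ) ≤ 1)).1 h with h1 | h1
        · exact absurd h1 hi.2
        · exact absurd h1 (hm1 i)
    refine ⟨L1, hL1pos, ?_⟩
    have htend : Tendsto (fun d : ℕ => (pc R d 1 : ℝ) / (R.card : ℝ) ^ d) atTop (nhds L1) := by
      have heq : ∀ d : ℕ, (pc R d 1 : ℝ) / (R.card : ℝ) ^ d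
          = L1 + ∑ i ∈ Finset.univ.filter (fun i => ¬ lam i = 1), w i * lam i ^ d := by
        intro d
        rw [hqd d, ← Finset.sum_filter_add_sum_filter_not Finset.univ (fun i => lam i = 1)]
        congr 1
        rw [hL1, hS1]
        apply Finset.sum_congr rfl
        intro i hi
        rw [Finset.mem_filter] at hi
        rw [hi.2, one_pow, mul_one]
      rw [show (nhds L1) = nhds (L1 + 0) by rw [add_zero]]
      simp only [heq]
      exact tendsto_const_nhds.add (hrest _ hlt)
    exact htend.mono_left inf_le_left
  · -- periodic case
    push_neg at hodd
    refine ⟨L2, lt_of_lt_of_le hL1pos hL12, ?_⟩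
    have hsub : {d : ℕ | pc R d 1 ≠ 0} ⊆ {d : ℕ | Even d} := by
      intro d hd
      by_contra hc
      simp only [Set.mem_setOf_eq] at hc
      exact hd (hodd d (Nat.not_even_iff_odd.1 hc))
    have hlt : ∀ i ∈ Finset.univ.filter (fun i => ¬ (lam i = 1 ∨ lam i = -1)), |lam i| < 1 := by
      intro i hi
      rw [Finset.mem_filter] at hi
      push_neg at hi
      rcases lt_or_eq_of_le (habs i) with h | h
      · exact h
      · rcases (abs_eq (by norm_num : (0:ℝ) ≤ 1)).1 h with h1 | h1
        · exact absurd h1 hi.2.1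
        · exact absurd h1 hi.2.2
    have heven : ∀ d : ℕ, Even d → (pc R d 1 : ℝ) / (R.card : ℝ) ^ d - L2
        = ∑ i ∈ Finset.univ.filter (fun i => ¬ (lam i = 1 ∨ lam i = -1)), w i * lam i ^ d := by
      intro d hd
      rw [hqd d, ← Finset.sum_filter_add_sum_filter_not Finset.univ
        (fun i => lam i = 1 ∨ lam i = -1)]
      have hfirst : ∑ i ∈ Finset.univ.filter (fun i => lam i = 1 ∨ lam i = -1),
          w i * lam i ^ d = L2 := by
        rw [hL2, hS1']
        apply Finset.sum_congr rfl
        intro i hi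
        rw [Finset.mem_filter] at hi
        rcases hi.2 with h1 | h1
        · rw [h1, one_pow, mul_one]
        · rw [h1, hd.neg_one_pow, mul_one]
      rw [hfirst]
      ring
    have hzero : Tendsto (fun d : ℕ => (pc R d 1 : ℝ) / (R.card : ℝ) ^ d - L2)
        (atTop ⊓ 𝓟 {d : ℕ | pc R d 1 ≠ 0}) (nhds 0) := by
      apply squeeze_zero_norm'
      · have : ∀ᶠ d in (atTop ⊓ 𝓟 {d : ℕ | pc R d 1 ≠ 0}),
            ‖(pc R d 1 : ℝ) / (R.card : ℝ) ^ d - L2‖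
              ≤ ∑ i ∈ Finset.univ.filter (fun i => ¬ (lam i = 1 ∨ lam i = -1)),
                  w i * |lam i| ^ d := by
          rw [Filter.eventually_inf_principal]
          apply Filter.Eventually.of_forall
          intro d hd
          have hdev : Even d := hsub hd
          rw [heven d hdev]
          calc ‖∑ i ∈ Finset.univ.filter (fun i => ¬ (lam i = 1 ∨ lam i = -1)),
              w i * lam i ^ d‖
              ≤ ∑ i ∈ Finset.univ.filter (fun i => ¬ (lam i = 1 ∨ lam i = -1)),
                ‖w i * lam i ^ d‖ := norm_sum_le _ _
            _ = ∑ i ∈ Finset.univ.filter (fun i => ¬ (lam i = 1 ∨ lam i = -1)),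
                w i * |lam i| ^ d := by
                apply Finset.sum_congr rfl
                intro i _
                rw [Real.norm_eq_abs, abs_mul, abs_of_nonneg (hw0 i), abs_pow]
        exact this
      · apply Tendsto.mono_left _ inf_le_left
        have h0 : Tendsto (fun d : ℕ => ∑ i ∈ Finset.univ.filter
            (fun i => ¬ (lam i = 1 ∨ lam i = -1)), w i * |lam i| ^ d) atTop (nhds 0) := by
          have : Tendsto (fun d : ℕ => ∑ i ∈ Finset.univ.filter
              (fun i => ¬ (lam i = 1 ∨ lam i = -1)), w i * |lam i| ^ d) atTop
              (nhds (∑ i ∈ Finset.univ.filter (fun i => ¬ (lam i = 1 ∨ lam i = -1)), 0)) := by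
            apply tendsto_finset_sum
            intro i hi
            have h1 : |(|lam i|)| < 1 := by
              rw [abs_abs]
              exact hlt i hi
            have h0 : Tendsto (fun d : ℕ => |lam i| ^ d) atTop (nhds 0) :=
              tendsto_pow_atTop_nhds_zero_of_abs_lt_one h1
            simpa using h0.const_mul (w i)
          simpa using this
        exact h0
    have := hzero.add_const L2
    simpa using this

end Walk

/-! ### Combinatorics of multiplexes -/

section Comb

variable (G : Type*) [Group G] [Fintype G] [DecidableEq G] (k : ℕ)

/-- The set of `k`-regular functions. -/
def Reg : Finset (Fin (k * Fintype.card G) → G) :=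
  univ.filter fun f => ∀ v : G, (univ.filter fun i => f i = v).card = k

variable {G k} (d : ℕ)

/-- Column tuples: `d`-tuples of `k`-regular functions with prescribed product. -/
def ColsH (h : Fin (k * Fintype.card G) → G) :
    Finset (Fin d → (Fin (k * Fintype.card G) → G)) :=
  univ.filter fun c => (∀ j, c j ∈ Reg G k) ∧ (List.ofFn c).prod = h

/-- Row tuples: ordered `k`-multiplexes. -/
def Rws : Finset (Fin (k * Fintype.card G) → (Fin d → G)) :=
  univ.filter fun x => (∀ i, (List.ofFn (x i)).prod = 1) ∧
    ∀ (j : Fin d) (v : G), (univ.filter fun i => x i j = v).card = k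

/-- The multiset of rows. -/
def rowsOf (x : Fin (k * Fintype.card G) → (Fin d → G)) : Multiset (Fin d → G) :=
  Multiset.map x Finset.univ.val

end Comb

section Comb2

variable {G : Type*} [Group G] [Fintype G] [DecidableEq G] {k : ℕ} {d : ℕ}

lemma card_filter_perm {ι : Type*} [Fintype ι] [DecidableEq ι] (σ : Equiv.Perm ι)
    (p : ι → Prop) [DecidablePred p] :
    (Finset.univ.filter fun i => p (σ i)).card = (Finset.univ.filter p).card := by
  apply Finset.card_bij (fun i _ => σ i)
  · intro a ha
    simp only [Finset.mem_filter, Finset.mem_univ, true_and] at ha ⊢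
    exact ha
  · intro a _ b _ hab
    exact σ.injective hab
  · intro b hb
    simp only [Finset.mem_filter, Finset.mem_univ, true_and] at hb ⊢
    exact ⟨σ.symm b, by simpa using hb, σ.apply_symm_apply b⟩

lemma exists_perm_two {ι : Type*} [DecidableEq ι] {i0 i1 p q : ι}
    (h01 : i0 ≠ i1) (hpq : p ≠ q) :
    ∃ σ : Equiv.Perm ι, σ i0 = p ∧ σ i1 = q := by
  set s := Equiv.swap i0 p with hs
  set t := Equiv.swap i1 (s.symm q) with ht
  have hti0 : t i0 = i0 := by
    apply Equiv.swap_apply_of_ne_of_ne h01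
    intro hc
    apply hpq
    have h2 := congrArg s hc
    rw [Equiv.apply_symm_apply] at h2
    rw [← h2, hs, Equiv.swap_apply_left]
  refine ⟨t.trans s, ?_, ?_⟩
  · rw [Equiv.trans_apply, hti0, hs, Equiv.swap_apply_left]
  · rw [Equiv.trans_apply, ht, Equiv.swap_apply_left, Equiv.apply_symm_apply]

lemma Reg_symm {f : Fin (k * Fintype.card G) → G} (hf : f ∈ Reg G k) :
    f⁻¹ ∈ Reg G k := by
  rw [Reg, Finset.mem_filter] at hf ⊢
  refine ⟨Finset.mem_univ _, fun v => ?_⟩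
  have heq : (Finset.univ.filter fun i => f⁻¹ i = v)
      = (Finset.univ.filter fun i => f i = v⁻¹) := by
    apply Finset.filter_congr
    intro i _
    rw [Pi.inv_apply]
    exact inv_eq_iff_eq_inv
  rw [heq, hf.2 v⁻¹]

lemma Reg_comp_perm {f : Fin (k * Fintype.card G) → G} (hf : f ∈ Reg G k)
    (σ : Equiv.Perm (Fin (k * Fintype.card G))) : f ∘ σ ∈ Reg G k := by
  rw [Reg, Finset.mem_filter] at hf ⊢
  refine ⟨Finset.mem_univ _, fun v => ?_⟩
  simp only [Function.comp_apply]
  rw [card_filter_perm σ (fun i => f i = v)]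
  exact hf.2 v

lemma base_reg (E : Fin k × G ≃ Fin (k * Fintype.card G)) :
    (fun i => (E.symm i).2) ∈ Reg G k := by
  rw [Reg, Finset.mem_filter]
  refine ⟨Finset.mem_univ _, fun v => ?_⟩
  have hbij : (Finset.univ.filter fun i => (E.symm i).2 = v).card
      = (Finset.univ : Finset (Fin k)).card := by
    apply Finset.card_bij' (fun i _ => (E.symm i).1) (fun a _ => E (a, v))
    · intro a _
      exact Finset.mem_univ _
    · intro a _
      simp only [Finset.mem_filter, Finset.mem_univ, true_and, Equiv.symm_apply_apply]
    · intro i hi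
      simp only [Finset.mem_filter, Finset.mem_univ, true_and] at hi
      rw [← hi]
      exact E.apply_symm_apply i
    · intro a _
      simp only [Equiv.symm_apply_apply]
  rw [hbij, Finset.card_univ, Fintype.card_fin]

lemma Reg_nonempty (hk : 0 < k) : (Reg G k).Nonempty := by
  exact ⟨_, base_reg (Fintype.equivOfCardEq (by simp))⟩

lemma Reg_card : (Reg G k).card * (k.factorial) ^ (Fintype.card G)
    = (k * Fintype.card G).factorial := by
  classical
  set E : Fin k × G ≃ Fin (k * Fintype.card G) := Fintype.equivOfCardEq (by simp) with hE
  set f₀ : Fin (k * Fintype.card G) → G := fun i => (E.symm i).2 with hf₀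
  have hf₀reg : f₀ ∈ Reg G k := base_reg E
  set Stab : Finset (Equiv.Perm (Fin (k * Fintype.card G))) :=
    Finset.univ.filter (fun ρ => f₀ ∘ ⇑ρ = f₀) with hStab
  have htotal : (Finset.univ : Finset (Equiv.Perm (Fin (k * Fintype.card G)))).card
      = ∑ f ∈ Reg G k,
        (Finset.univ.filter fun σ : Equiv.Perm (Fin (k * Fintype.card G)) =>
          f₀ ∘ ⇑σ = f).card := by
    apply Finset.card_eq_sum_card_fiberwise
    intro σ _
    exact Reg_comp_perm hf₀reg σ
  have hsurj : ∀ f ∈ Reg G k,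
      ∃ σ : Equiv.Perm (Fin (k * Fintype.card G)), f₀ ∘ ⇑σ = f := by
    intro f hf
    have hcards : ∀ v : G, Fintype.card {i // f i = v} = Fintype.card {i // f₀ i = v} := by
      intro v
      rw [Fintype.card_subtype, Fintype.card_subtype]
      have h1 : (Finset.univ.filter fun i => f i = v).card = k := by
        rw [Reg, Finset.mem_filter] at hf
        exact hf.2 v
      have h2 : (Finset.univ.filter fun i => f₀ i = v).card = k := by
        have h3 := hf₀reg
        rw [Reg, Finset.mem_filter] at h3
        exact h3.2 v
      rw [h1, h2]
    set e : ∀ v : G, {i // f i = v} ≃ {i // f₀ i = v} :=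
      fun v => Fintype.equivOfCardEq (hcards v) with he
    refine ⟨(Equiv.sigmaFiberEquiv f).symm.trans
      ((Equiv.sigmaCongrRight e).trans (Equiv.sigmaFiberEquiv f₀)), funext fun i => ?_⟩
    show f₀ ((Equiv.sigmaFiberEquiv f₀) ((Equiv.sigmaCongrRight e)
      ((Equiv.sigmaFiberEquiv f).symm i))) = f i
    have h4 : (Equiv.sigmaFiberEquiv f).symm i = ⟨f i, ⟨i, rfl⟩⟩ := rfl
    rw [h4]
    exact (e (f i) ⟨i, rfl⟩).2
  have hfib : ∀ f ∈ Reg G k,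
      (Finset.univ.filter fun σ : Equiv.Perm (Fin (k * Fintype.card G)) =>
        f₀ ∘ ⇑σ = f).card = Stab.card := by
    intro f hf
    obtain ⟨σf, hσf⟩ := hsurj f hf
    refine Finset.card_bij' (fun σ _ => σ * σf⁻¹) (fun ρ _ => ρ * σf) ?hi ?hj ?lft ?rgt
    case hi =>
      intro σ hσ
      have hσ2 : f₀ ∘ ⇑σ = f := (Finset.mem_filter.1 hσ).2
      refine Finset.mem_filter.2 ⟨Finset.mem_univ _, funext fun x => ?_⟩
      simp only [Function.comp_apply, Equiv.Perm.mul_apply]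
      rw [show f₀ (σ (σf⁻¹ x)) = f (σf⁻¹ x) from congrFun hσ2 (σf⁻¹ x)]
      rw [show f (σf⁻¹ x) = f₀ (σf (σf⁻¹ x)) from (congrFun hσf (σf⁻¹ x)).symm]
      rw [Equiv.Perm.inv_def, Equiv.apply_symm_apply]
    case hj =>
      intro ρ hρ
      have hρ2 : f₀ ∘ ⇑ρ = f₀ := (Finset.mem_filter.1 hρ).2
      refine Finset.mem_filter.2 ⟨Finset.mem_univ _, funext fun x => ?_⟩
      simp only [Function.comp_apply, Equiv.Perm.mul_apply]
      rw [show f₀ (ρ (σf x)) = f₀ (σf x) from congrFun hρ2 (σf x)]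
      exact congrFun hσf x
    case lft =>
      intro σ _
      exact inv_mul_cancel_right σ σf
    case rgt =>
      intro ρ _
      exact mul_inv_cancel_right ρ σf
  have hsnd : ∀ (ρ : Equiv.Perm (Fin (k * Fintype.card G))), f₀ ∘ ⇑ρ = f₀ →
      ∀ p : Fin k × G, (E.symm (ρ (E p))).2 = p.2 := by
    intro ρ hρ p
    have h1 : f₀ (ρ (E p)) = f₀ (E p) := congrFun hρ (E p)
    rw [hf₀] at h1
    simpa using h1
  have hinj : ∀ (ρ : Equiv.Perm (Fin (k * Fintype.card G))), f₀ ∘ ⇑ρ = f₀ → ∀ v : G,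
      Function.Injective (fun a : Fin k => (E.symm (ρ (E (a, v)))).1) := by
    intro ρ hρ v a b hab
    have h2 : E.symm (ρ (E (a, v))) = E.symm (ρ (E (b, v))) := by
      refine Prod.ext_iff.2 ⟨hab, ?_⟩
      rw [hsnd ρ hρ (a, v), hsnd ρ hρ (b, v)]
    have h3 : (a, v) = (b, v) := E.injective (ρ.injective (E.symm.injective h2))
    exact (Prod.ext_iff.1 h3).1
  have hstabcard : Stab.card = (k.factorial) ^ (Fintype.card G) := by
    have hcard2 : Stab.card
        = Fintype.card {ρ : Equiv.Perm (Fin (k * Fintype.card G)) // f₀ ∘ ⇑ρ = f₀} :=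
      (Fintype.card_subtype _).symm
    have hequiv : {ρ : Equiv.Perm (Fin (k * Fintype.card G)) // f₀ ∘ ⇑ρ = f₀}
        ≃ (G → Equiv.Perm (Fin k)) := by
      refine
        { toFun := fun ρ => fun v => Equiv.ofBijective
            (fun a => (E.symm (ρ.1 (E (a, v)))).1)
            (Finite.injective_iff_bijective.1 (hinj ρ.1 ρ.2 v)),
          invFun := fun g => ⟨E.permCongr (Equiv.prodCongrLeft (fun v => g v)), ?_⟩,
          left_inv := ?_, right_inv := ?_ }
      · funext i
        simp only [Function.comp_apply, Equiv.permCongr_apply, hf₀,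
          Equiv.symm_apply_apply]
        rcases hp : E.symm i with ⟨a, v⟩
        rw [Equiv.prodCongrLeft_apply]
      · rintro ⟨ρ, hρ⟩
        apply Subtype.ext
        apply Equiv.ext
        intro x
        simp only [Equiv.permCongr_apply]
        have h5 : Equiv.prodCongrLeft
            (fun v => Equiv.ofBijective (fun a => (E.symm (ρ (E (a, v)))).1)
              (Finite.injective_iff_bijective.1 (hinj ρ hρ v))) (E.symm x)
            = E.symm (ρ x) := by
          rcases hp : E.symm x with ⟨a, v⟩
          rw [Equiv.prodCongrLeft_apply]
          have hx : E (a, v) = x := by rw [← hp, Equiv.apply_symm_apply]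
          refine Prod.ext_iff.2 ⟨?_, ?_⟩
          · show (E.symm (ρ (E (a, v)))).1 = (E.symm (ρ x)).1
            rw [hx]
          · rw [← hx]
            exact (hsnd ρ hρ (a, v)).symm
        rw [h5, Equiv.apply_symm_apply]
      · intro g
        funext v
        apply Equiv.ext
        intro a
        show (E.symm ((E.permCongr (Equiv.prodCongrLeft fun v => g v)) (E (a, v)))).1
          = g v a
        rw [Equiv.permCongr_apply, Equiv.symm_apply_apply, Equiv.symm_apply_apply,
          Equiv.prodCongrLeft_apply]
    rw [hcard2, Fintype.card_congr hequiv, Fintype.card_fun, Fintype.card_perm,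
      Fintype.card_fin]
  have hNfact : (k * Fintype.card G).factorial = (Reg G k).card * Stab.card := by
    have h6 : (Finset.univ : Finset (Equiv.Perm (Fin (k * Fintype.card G)))).card
        = (k * Fintype.card G).factorial := by
      rw [Finset.card_univ, Fintype.card_perm, Fintype.card_fin]
    rw [← h6, htotal]
    rw [Finset.sum_congr rfl hfib, Finset.sum_const, smul_eq_mul]
  rw [hNfact, hstabcard]

lemma ColsH_card_succ (h : Fin (k * Fintype.card G) → G) (d : ℕ) :
    (ColsH (d + 1) h).card = ∑ s ∈ Reg G k, (ColsH d (h * s⁻¹)).card := by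
  rw [Finset.card_eq_sum_card_fiberwise
    (f := fun c : Fin (d + 1) → (Fin (k * Fintype.card G) → G) => c (Fin.last d))
    (t := Reg G k) (fun c hc => (Finset.mem_filter.1 hc).2.1 (Fin.last d))]
  apply Finset.sum_congr rfl
  intro s hs
  refine Finset.card_bij' (fun c _ => (fun i : Fin d => c i.castSucc))
    (fun b _ => Fin.snoc b s) ?hi ?hj ?lft ?rgt
  case hi =>
    intro c hc
    beta_reduce
    have hc1 : c ∈ ColsH (d + 1) h := (Finset.mem_filter.1 hc).1
    have hlast : c (Fin.last d) = s := (Finset.mem_filter.1 hc).2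
    obtain ⟨-, hreg, hprod⟩ := Finset.mem_filter.1 hc1
    refine Finset.mem_filter.2 ⟨Finset.mem_univ _, fun j => hreg j.castSucc, ?_⟩
    rw [List.ofFn_succ', List.prod_concat, hlast] at hprod
    rw [← hprod, mul_inv_cancel_right]
  case hj =>
    intro c hc
    beta_reduce
    obtain ⟨-, hreg, hprod⟩ := Finset.mem_filter.1 hc
    refine Finset.mem_filter.2 ⟨Finset.mem_filter.2
      ⟨Finset.mem_univ _, fun j => ?_, ?_⟩, ?_⟩
    · refine Fin.lastCases ?_ ?_ j
      · rw [Fin.snoc_last]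
        exact hs
      · intro i
        rw [Fin.snoc_castSucc]
        exact hreg i
    · rw [List.ofFn_succ', List.prod_concat, Fin.snoc_last]
      have heq2 : (List.ofFn fun i : Fin d =>
          (Fin.snoc c s : Fin (d + 1) → (Fin (k * Fintype.card G) → G)) i.castSucc)
          = List.ofFn c := by
        congr 1
        funext i
        rw [Fin.snoc_castSucc]
      rw [heq2, hprod, inv_mul_cancel_right]
    · simp
  case lft =>
    intro c hc
    beta_reduce
    have hlast : c (Fin.last d) = s := (Finset.mem_filter.1 hc).2
    rw [← hlast]
    exact Fin.snoc_init_self c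
  case rgt =>
    intro b _
    beta_reduce
    funext i
    rw [Fin.snoc_castSucc]

lemma ColsH_card_eq_pc (h : Fin (k * Fintype.card G) → G) (d : ℕ) :
    (ColsH d h).card = pc (Reg G k) d h := by
  induction d generalizing h with
  | zero =>
    by_cases h1 : h = 1
    · subst h1
      have huniv : (ColsH (G := G) (k := k) 0 1) = Finset.univ := by
        rw [ColsH]
        apply Finset.filter_true_of_mem
        intro c _
        exact ⟨fun j => j.elim0, by simp⟩
      rw [huniv, Finset.card_univ]
      simp [pc, Fintype.card_fun]
    · have hempty : (ColsH (G := G) (k := k) 0 h) = ∅ := by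
        rw [ColsH, Finset.filter_eq_empty_iff]
        rintro c - ⟨-, hp⟩
        apply h1
        rw [List.ofFn_zero, List.prod_nil] at hp
        exact hp.symm
      rw [hempty]
      simp [pc, h1]
  | succ d ih =>
    rw [ColsH_card_succ]
    simp only [pc]
    exact Finset.sum_congr rfl fun s _ => ih _

lemma Rws_card_eq (d : ℕ) : (Rws (G := G) (k := k) d).card = pc (Reg G k) d 1 := by
  rw [← ColsH_card_eq_pc]
  apply Finset.card_bij' (fun x _ => Function.swap x) (fun c _ => Function.swap c)
  · intro x hx
    rw [Rws, Finset.mem_filter] at hx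
    rw [ColsH, Finset.mem_filter]
    refine ⟨Finset.mem_univ _, fun j => ?_, ?_⟩
    · rw [Reg, Finset.mem_filter]
      exact ⟨Finset.mem_univ _, fun v => hx.2.2 j v⟩
    · funext i
      rw [Pi.list_prod_apply, List.map_ofFn]
      have heq : ((fun f => f i) ∘ (Function.swap x)) = x i := funext fun j => rfl
      rw [heq, hx.2.1 i, Pi.one_apply]
  · intro c hc
    rw [ColsH, Finset.mem_filter] at hc
    rw [Rws, Finset.mem_filter]
    refine ⟨Finset.mem_univ _, fun i => ?_, fun j v => ?_⟩
    · have := congrFun hc.2.2 i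
      rw [Pi.list_prod_apply, List.map_ofFn] at this
      have heq : ((fun f => f i) ∘ c) = fun j => c j i := funext fun j => rfl
      rw [heq] at this
      rw [Pi.one_apply] at this
      exact this
    · have hcj := hc.2.1 j
      rw [Reg, Finset.mem_filter] at hcj
      exact hcj.2 v
  · intro x _
    rfl
  · intro c _
    rfl

lemma Rws_comp_perm {x : Fin (k * Fintype.card G) → (Fin d → G)}
    (hx : x ∈ Rws d) (σ : Equiv.Perm (Fin (k * Fintype.card G))) :
    x ∘ σ ∈ Rws d := by
  rw [Rws, Finset.mem_filter] at hx ⊢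
  refine ⟨Finset.mem_univ _, fun i => hx.2.1 (σ i), fun j v => ?_⟩
  simp only [Function.comp_apply]
  rw [card_filter_perm σ (fun i => x i j = v)]
  exact hx.2.2 j v

lemma rowsOf_eq_ofFn (x : Fin (k * Fintype.card G) → (Fin d → G)) :
    rowsOf d x = ↑(List.ofFn x) := by
  unfold rowsOf
  exact Fin.univ_val_map x

lemma rowsOf_comp_perm (x : Fin (k * Fintype.card G) → (Fin d → G))
    (σ : Equiv.Perm (Fin (k * Fintype.card G))) : rowsOf d (x ∘ σ) = rowsOf d x := by
  rw [rowsOf_eq_ofFn, rowsOf_eq_ofFn]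
  exact Multiset.coe_eq_coe.2 (Equiv.Perm.ofFn_comp_perm σ x)

lemma exists_perm_of_rowsOf_eq {x y : Fin (k * Fintype.card G) → (Fin d → G)}
    (hxy : rowsOf d x = rowsOf d y) :
    ∃ σ : Equiv.Perm (Fin (k * Fintype.card G)), x = y ∘ σ := by
  classical
  letI : LinearOrder (Fin d → G) :=
    LinearOrder.lift' (Fintype.equivFin (Fin d → G)) (Equiv.injective _)
  rw [rowsOf_eq_ofFn, rowsOf_eq_ofFn] at hxy
  have hperm : (List.ofFn x).Perm (List.ofFn y) := Multiset.coe_eq_coe.1 hxy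
  set σx := Tuple.sort x with hσx
  set σy := Tuple.sort y with hσy
  have hchain : (List.ofFn (x ∘ σx)).Perm (List.ofFn (y ∘ σy)) :=
    ((Equiv.Perm.ofFn_comp_perm σx x).trans hperm).trans
      (Equiv.Perm.ofFn_comp_perm σy y).symm
  have heq : List.ofFn (x ∘ σx) = List.ofFn (y ∘ σy) :=
    List.Perm.eq_of_sortedLE
      ((Tuple.monotone_sort x).sortedLE_ofFn) ((Tuple.monotone_sort y).sortedLE_ofFn) hchain
  have hfun : x ∘ σx = y ∘ σy := List.ofFn_inj.1 heq
  refine ⟨σx.symm.trans σy, ?_⟩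
  funext i
  have := congrFun hfun (σx.symm i)
  simpa [Equiv.trans_apply] using this

lemma rowsOf_card (x : Fin (k * Fintype.card G) → (Fin d → G)) :
    Multiset.card (rowsOf d x) = k * Fintype.card G := by
  unfold rowsOf
  rw [Multiset.card_map]
  have : Multiset.card (Finset.univ.val : Multiset (Fin (k * Fintype.card G)))
      = (Finset.univ : Finset (Fin (k * Fintype.card G))).card := rfl
  rw [this, Finset.card_univ, Fintype.card_fin]

lemma rowsOf_filter_card (x : Fin (k * Fintype.card G) → (Fin d → G))
    (p : (Fin d → G) → Prop) [DecidablePred p] :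
    Multiset.card ((rowsOf d x).filter p)
      = (Finset.univ.filter fun i => p (x i)).card := by
  unfold rowsOf
  rw [Multiset.filter_map]
  rw [Multiset.card_map]
  rfl

lemma mem_Rws_iff {x : Fin (k * Fintype.card G) → (Fin d → G)} :
    x ∈ Rws d ↔ IsKMultiplexG (SdG G d) k (rowsOf d x) := by
  rw [Rws, Finset.mem_filter, IsKMultiplexG]
  constructor
  · rintro ⟨-, h1, h2⟩
    refine ⟨rowsOf_card x, ?_, ?_⟩
    · intro z hz
      rw [rowsOf_eq_ofFn, Multiset.mem_coe, List.mem_ofFn] at hz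
      obtain ⟨i, rfl⟩ := hz
      exact h1 i
    · intro j v
      rw [rowsOf_filter_card x (fun z => z j = v)]
      exact h2 j v
  · rintro ⟨-, h1, h2⟩
    refine ⟨Finset.mem_univ _, fun i => ?_, fun j v => ?_⟩
    · apply h1
      rw [rowsOf_eq_ofFn, Multiset.mem_coe, List.mem_ofFn]
      exact ⟨i, rfl⟩
    · rw [← rowsOf_filter_card x (fun z => z j = v)]
      exact h2 j v

lemma ofFn_get_cast {α : Type*} : ∀ (l : List α) (n : ℕ) (h : l.length = n),
    List.ofFn (fun i : Fin n => l.get (Fin.cast h.symm i)) = l := by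
  intro l n h
  subst h
  simpa using List.ofFn_get l

lemma multiplex_exists_rowsOf {K : Multiset (Fin d → G)}
    (hK : Multiset.card K = k * Fintype.card G) :
    ∃ x : Fin (k * Fintype.card G) → (Fin d → G), rowsOf d x = K := by
  have hlen : K.toList.length = k * Fintype.card G := by
    rw [Multiset.length_toList, hK]
  refine ⟨fun i => K.toList.get (Fin.cast hlen.symm i), ?_⟩
  rw [rowsOf_eq_ofFn, ofFn_get_cast K.toList _ hlen, Multiset.coe_toList]

lemma PerkG_eq :
    PerkG (SdG G d) k = (((Rws (G := G) (k := k) d)).image (rowsOf d)).card := by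
  have hset : {K : Multiset (Fin d → G) | IsKMultiplexG (SdG G d) k K}
      = ↑(((Rws (G := G) (k := k) d)).image (rowsOf d)) := by
    ext K
    simp only [Set.mem_setOf_eq, Finset.coe_image, Set.mem_image, Finset.mem_coe]
    constructor
    · intro hK
      obtain ⟨x, hx⟩ := multiplex_exists_rowsOf hK.1
      exact ⟨x, mem_Rws_iff.2 (hx ▸ hK), hx⟩
    · rintro ⟨x, hx, rfl⟩
      exact mem_Rws_iff.1 hx
  rw [PerkG, hset, Set.ncard_coe_finset]

lemma perkG_eq :
    perkG (SdG G d) k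
      = ((((Rws (G := G) (k := k) d)).image (rowsOf d)).filter Multiset.Nodup).card := by
  have hset : {K : Multiset (Fin d → G) | K.Nodup ∧ IsKMultiplexG (SdG G d) k K}
      = ↑((((Rws (G := G) (k := k) d)).image (rowsOf d)).filter Multiset.Nodup) := by
    ext K
    simp only [Set.mem_setOf_eq, Finset.coe_filter, Finset.mem_image]
    constructor
    · intro hK
      obtain ⟨x, hx⟩ := multiplex_exists_rowsOf hK.2.1
      exact ⟨⟨x, mem_Rws_iff.2 (hx ▸ hK.2), hx⟩, hK.1⟩
    · rintro ⟨⟨x, hx, rfl⟩, hnd⟩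
      exact ⟨hnd, mem_Rws_iff.1 hx⟩
  rw [perkG, hset, Set.ncard_coe_finset]

lemma T_le_Per :
    (Rws (G := G) (k := k) d).card ≤
      (k * Fintype.card G).factorial * (((Rws (G := G) (k := k) d)).image (rowsOf d)).card := by
  classical
  apply Finset.card_le_mul_card_image
  intro K hK
  obtain ⟨x₀, -, rfl⟩ := Finset.mem_image.1 hK
  calc ((Rws (G := G) (k := k) d).filter fun x => rowsOf d x = rowsOf d x₀).card
      ≤ (Finset.univ : Finset (Equiv.Perm (Fin (k * Fintype.card G)))).card := by
        apply Finset.card_le_card_of_injOn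
          (fun x => if hx : ∃ σ : Equiv.Perm (Fin (k * Fintype.card G)), x = x₀ ∘ σ
            then hx.choose else 1)
        · intro x _
          exact Finset.mem_univ _
        · intro x hx y hy hxy
          have hex : ∃ σ : Equiv.Perm _, x = x₀ ∘ σ :=
            exists_perm_of_rowsOf_eq (Finset.mem_filter.1 hx).2
          have hey : ∃ σ : Equiv.Perm _, y = x₀ ∘ σ :=
            exists_perm_of_rowsOf_eq (Finset.mem_filter.1 hy).2
          simp only [dif_pos hex, dif_pos hey] at hxy
          rw [hex.choose_spec, hey.choose_spec, hxy]
    _ = (k * Fintype.card G).factorial := by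
        rw [Finset.card_univ, Fintype.card_perm, Fintype.card_fin]

lemma per_le_T :
    ((((Rws (G := G) (k := k) d)).image (rowsOf d)).filter Multiset.Nodup).card
      * (k * Fintype.card G).factorial ≤ (Rws (G := G) (k := k) d).card := by
  classical
  set S := ((Rws (G := G) (k := k) d)).image (rowsOf d) with hS
  have key : ∀ K ∈ S.filter Multiset.Nodup,
      (k * Fintype.card G).factorial
        ≤ ((Rws (G := G) (k := k) d).filter fun x => rowsOf d x = K).card := by
    intro K hK
    rw [Finset.mem_filter] at hK
    obtain ⟨x₀, hx₀m, hx₀K⟩ := Finset.mem_image.1 hK.1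
    have hx₀inj : Function.Injective x₀ := by
      have hnodup : (List.ofFn x₀).Nodup := by
        have h2 := hK.2
        rw [← hx₀K, rowsOf_eq_ofFn] at h2
        exact Multiset.coe_nodup.1 h2
      exact List.nodup_ofFn.1 hnodup
    calc (k * Fintype.card G).factorial
        = (Finset.univ : Finset (Equiv.Perm (Fin (k * Fintype.card G)))).card := by
          rw [Finset.card_univ, Fintype.card_perm, Fintype.card_fin]
      _ ≤ _ := by
          apply Finset.card_le_card_of_injOn
            (fun σ : Equiv.Perm (Fin (k * Fintype.card G)) => x₀ ∘ ⇑σ)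
          · intro σ _
            rw [Finset.mem_coe, Finset.mem_filter]
            exact ⟨Rws_comp_perm hx₀m σ, by rw [rowsOf_comp_perm, hx₀K]⟩
          · intro σ _ τ _ hστ
            exact Equiv.ext fun i => hx₀inj (congrFun hστ i)
  calc (S.filter Multiset.Nodup).card * (k * Fintype.card G).factorial
      = ∑ _K ∈ S.filter Multiset.Nodup, (k * Fintype.card G).factorial := by
        rw [Finset.sum_const, smul_eq_mul, mul_comm]
    _ ≤ ∑ K ∈ S.filter Multiset.Nodup,
          ((Rws (G := G) (k := k) d).filter fun x => rowsOf d x = K).card :=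
        Finset.sum_le_sum key
    _ ≤ ∑ K ∈ S, ((Rws (G := G) (k := k) d).filter fun x => rowsOf d x = K).card :=
        Finset.sum_le_sum_of_subset (Finset.filter_subset _ _)
    _ = (Rws (G := G) (k := k) d).card :=
        (Finset.card_eq_sum_card_fiberwise (fun x hx => Finset.mem_image_of_mem _ hx)).symm

/-- regular functions whose first two values agree -/
def Reg12 (G : Type*) [Group G] [Fintype G] [DecidableEq G] (k : ℕ)
    (h2 : 2 ≤ k * Fintype.card G) : Finset (Fin (k * Fintype.card G) → G) :=
  (Reg G k).filter fun f => f ⟨0, by omega⟩ = f ⟨1, by omega⟩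

lemma Rws_col_mem {x : Fin (k * Fintype.card G) → (Fin d → G)}
    (hx : x ∈ Rws (G := G) (k := k) d) (j : Fin d) :
    (fun i => x i j) ∈ Reg G k := by
  rw [Rws, Finset.mem_filter] at hx
  rw [Reg, Finset.mem_filter]
  exact ⟨Finset.mem_univ _, fun v => hx.2.2 j v⟩

lemma rep_witness (h2 : 2 ≤ k * Fintype.card G) {K : Multiset (Fin d → G)}
    (hK : K ∈ ((Rws (G := G) (k := k) d)).image (rowsOf d)) (hnd : ¬ K.Nodup) :
    ∃ x, x ∈ Rws (G := G) (k := k) d ∧ rowsOf d x = K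
      ∧ x ⟨0, by omega⟩ = x ⟨1, by omega⟩ := by
  classical
  obtain ⟨x₁, hx₁, rfl⟩ := Finset.mem_image.1 hK
  have hninj : ¬ Function.Injective x₁ := by
    intro hinj
    apply hnd
    rw [rowsOf_eq_ofFn]
    exact Multiset.coe_nodup.2 (List.nodup_ofFn.2 hinj)
  rw [Function.not_injective_iff] at hninj
  obtain ⟨p, q, hpq, hne⟩ := hninj
  obtain ⟨σ, hσ0, hσ1⟩ := exists_perm_two
    (show (⟨0, by omega⟩ : Fin (k * Fintype.card G)) ≠ ⟨1, by omega⟩ by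
      simp [Fin.ext_iff]) hne
  refine ⟨x₁ ∘ σ, Rws_comp_perm hx₁ σ, rowsOf_comp_perm x₁ σ, ?_⟩
  show x₁ (σ _) = x₁ (σ _)
  rw [hσ0, hσ1, hpq]

lemma rep_le (h2 : 2 ≤ k * Fintype.card G) :
    ((((Rws (G := G) (k := k) d)).image (rowsOf d)).filter (fun K => ¬ K.Nodup)).card
      ≤ (Reg12 G k h2).card ^ d := by
  classical
  have hle : ((((Rws (G := G) (k := k) d)).image (rowsOf d)).filter (fun K => ¬ K.Nodup)).card
      ≤ (Finset.univ.filter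
          (fun c : Fin d → (Fin (k * Fintype.card G) → G) =>
            ∀ j, c j ∈ Reg12 G k h2)).card := by
    apply Finset.card_le_card_of_injOn (fun K =>
      if hK : ∃ x, x ∈ Rws (G := G) (k := k) d ∧ rowsOf d x = K
          ∧ x ⟨0, by omega⟩ = x ⟨1, by omega⟩ then
        (fun j i => hK.choose i j)
      else fun _ _ => 1)
    · intro K hKm
      rw [Finset.mem_coe, Finset.mem_filter] at hKm
      have hK : ∃ x, x ∈ Rws (G := G) (k := k) d ∧ rowsOf d x = K
          ∧ x ⟨0, by omega⟩ = x ⟨1, by omega⟩ := rep_witness h2 hKm.1 hKm.2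
      beta_reduce
      rw [dif_pos hK]
      rw [Finset.mem_coe, Finset.mem_filter]
      refine ⟨Finset.mem_univ _, fun j => ?_⟩
      rw [Reg12, Finset.mem_filter]
      exact ⟨Rws_col_mem hK.choose_spec.1 j, congrFun hK.choose_spec.2.2 j⟩
    · intro K hKm K' hKm' hff
      rw [Finset.mem_coe, Finset.mem_filter] at hKm hKm'
      have hK : ∃ x, x ∈ Rws (G := G) (k := k) d ∧ rowsOf d x = K
          ∧ x ⟨0, by omega⟩ = x ⟨1, by omega⟩ := rep_witness h2 hKm.1 hKm.2
      have hK' : ∃ x, x ∈ Rws (G := G) (k := k) d ∧ rowsOf d x = K'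
          ∧ x ⟨0, by omega⟩ = x ⟨1, by omega⟩ := rep_witness h2 hKm'.1 hKm'.2
      simp only [dif_pos hK, dif_pos hK'] at hff
      have hxfun : hK.choose = hK'.choose := by
        funext i j
        exact congrFun (congrFun hff j) i
      rw [← hK.choose_spec.2.1, ← hK'.choose_spec.2.1, hxfun]
  calc ((((Rws (G := G) (k := k) d)).image (rowsOf d)).filter (fun K => ¬ K.Nodup)).card
      ≤ (Finset.univ.filter
          (fun c : Fin d → (Fin (k * Fintype.card G) → G) =>
            ∀ j, c j ∈ Reg12 G k h2)).card := hle
    _ = (Reg12 G k h2).card ^ d := by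
        rw [← Fintype.card_subtype]
        rw [Fintype.card_congr
          (Equiv.subtypePiEquivPi (p := fun _ g => g ∈ Reg12 G k h2))]
        rw [Fintype.card_fun, Fintype.card_coe, Fintype.card_fin]

lemma Reg12_lt (hk : 0 < k) (hG : 2 ≤ Fintype.card G) (h2 : 2 ≤ k * Fintype.card G) :
    (Reg12 G k h2).card < (Reg G k).card := by
  classical
  apply Finset.card_lt_card
  rw [Finset.ssubset_iff_of_subset
    (show Reg12 G k h2 ⊆ Reg G k from Finset.filter_subset _ _)]
  obtain ⟨v, w, hvw⟩ := Fintype.exists_pair_of_one_lt_card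
    (by omega : 1 < Fintype.card G)
  set f₀ : Fin (k * Fintype.card G) → G :=
    fun i => ((Fintype.equivOfCardEq
      (by simp : Fintype.card (Fin k × G) = Fintype.card (Fin (k * Fintype.card G)))).symm i).2
    with hf₀
  have hf₀reg : f₀ ∈ Reg G k := base_reg _
  have hfib : ∀ u : G, ∃ p, f₀ p = u := by
    intro u
    have h3 : (Finset.univ.filter fun i => f₀ i = u).card = k := by
      have h4 := hf₀reg
      rw [Reg, Finset.mem_filter] at h4
      exact h4.2 u
    have hpos : 0 < (Finset.univ.filter fun i => f₀ i = u).card := by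
      rw [h3]; exact hk
    obtain ⟨p, hp⟩ := Finset.card_pos.1 hpos
    exact ⟨p, (Finset.mem_filter.1 hp).2⟩
  obtain ⟨p, hp⟩ := hfib v
  obtain ⟨q, hq⟩ := hfib w
  have hpq : p ≠ q := fun hc => hvw (by rw [← hp, ← hq, hc])
  obtain ⟨σ, hσ0, hσ1⟩ := exists_perm_two
    (show (⟨0, by omega⟩ : Fin (k * Fintype.card G)) ≠ ⟨1, by omega⟩ by
      simp [Fin.ext_iff]) hpq
  refine ⟨f₀ ∘ σ, Reg_comp_perm hf₀reg σ, ?_⟩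
  rw [Reg12, Finset.mem_filter]
  rintro ⟨-, hcontra⟩
  apply hvw
  simp only [Function.comp_apply] at hcontra
  rw [hσ0, hσ1, hp, hq] at hcontra
  exact hcontra

end Comb2

end IterAux

open Filter in
/-- For a finite group `G` of order `n` and an odd positive `k`, there
is a constant `c = c(G,k) > 0` such that `Per_k(S_d(G)) / ((kn)!/(k!)^n)^(d-2) → c`
along the set of `d` with `Per_k(S_d(G)) ≠ 0`, and
`per_k(S_d(G)) / ((kn)!/(k!)^n)^(d-2) → c` along the set of `d` with
`per_k(S_d(G)) ≠ 0`. -/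
theorem iterated_group_odd_plex_asymptotics (G : Type*) [Group G] [Fintype G]
    [DecidableEq G] (k : ℕ) (hk : 0 < k) (hko : Odd k) :
    ∃ c : ℝ, 0 < c ∧
      Tendsto
        (fun d : ℕ => (PerkG (SdG G d) k : ℝ) /
          (((k * Fintype.card G).factorial : ℝ) /
            (k.factorial : ℝ) ^ (Fintype.card G)) ^ (d - 2))
        (atTop ⊓ 𝓟 {d : ℕ | PerkG (SdG G d) k ≠ 0}) (nhds c) ∧
      Tendsto
        (fun d : ℕ => (perkG (SdG G d) k : ℝ) /
          (((k * Fintype.card G).factorial : ℝ) /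
            (k.factorial : ℝ) ^ (Fintype.card G)) ^ (d - 2))
        (atTop ⊓ 𝓟 {d : ℕ | perkG (SdG G d) k ≠ 0}) (nhds c) := by
  classical
  open IterAux in
  rcases Nat.lt_or_ge (Fintype.card G) 2 with hn1 | hn2
  · -- trivial group case
    have hn1' : Fintype.card G = 1 := by
      have : 0 < Fintype.card G := Fintype.card_pos
      omega
    haveI hsub : Subsingleton G := Fintype.card_le_one_iff_subsingleton.1 (by omega)
    have hρ : (((k * Fintype.card G).factorial : ℝ) / (k.factorial : ℝ) ^ (Fintype.card G))
        = 1 := by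
      rw [hn1', mul_one, pow_one, div_self]
      exact_mod_cast (Nat.factorial_pos k).ne'
    have hPer : ∀ d, PerkG (SdG G d) k = 1 := by
      intro d
      rw [PerkG]
      have hset : {K : Multiset (Fin d → G) | IsKMultiplexG (SdG G d) k K}
          = {Multiset.replicate (k * Fintype.card G) (fun _ => 1)} := by
        ext K
        simp only [Set.mem_setOf_eq, Set.mem_singleton_iff]
        constructor
        · intro hK
          refine Multiset.eq_replicate.2 ⟨hK.1, ?_⟩
          intro b _
          funext j
          exact Subsingleton.elim _ _
        · rintro rfl
          refine ⟨Multiset.card_replicate _ _, ?_, ?_⟩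
          · intro x _
            show (List.ofFn x).prod = 1
            exact Subsingleton.elim _ _
          · intro j v
            rw [Multiset.filter_eq_self.2 (fun a _ => Subsingleton.elim _ _),
              Multiset.card_replicate, hn1', mul_one]
      rw [hset, Set.ncard_singleton]
    refine ⟨1, one_pos, ?_, ?_⟩
    · have hfun : (fun d : ℕ => (PerkG (SdG G d) k : ℝ) /
          (((k * Fintype.card G).factorial : ℝ) /
            (k.factorial : ℝ) ^ (Fintype.card G)) ^ (d - 2)) = fun _ => 1 := by
        funext d
        rw [hPer d, hρ]
        simp
      rw [hfun]
      exact tendsto_const_nhds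
    · rcases eq_or_ne k 1 with rfl | hk1
      · have hper : ∀ d, perkG (SdG G d) 1 = 1 := by
          intro d
          rw [perkG]
          have hset : {K : Multiset (Fin d → G) | K.Nodup ∧ IsKMultiplexG (SdG G d) 1 K}
              = {Multiset.replicate (1 * Fintype.card G) (fun _ => 1)} := by
            ext K
            simp only [Set.mem_setOf_eq, Set.mem_singleton_iff]
            constructor
            · intro hK
              refine Multiset.eq_replicate.2 ⟨hK.2.1, ?_⟩
              intro b _
              funext j
              exact Subsingleton.elim _ _
            · rintro rfl
              refine ⟨?_, Multiset.card_replicate _ _, ?_, ?_⟩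
              · rw [hn1', one_mul]
                exact Multiset.nodup_singleton _
              · intro x _
                show (List.ofFn x).prod = 1
                exact Subsingleton.elim _ _
              · intro j v
                rw [Multiset.filter_eq_self.2 (fun a _ => Subsingleton.elim _ _),
                  Multiset.card_replicate, hn1', mul_one]
          rw [hset, Set.ncard_singleton]
        have hfun : (fun d : ℕ => (perkG (SdG G d) 1 : ℝ) /
            (((1 * Fintype.card G).factorial : ℝ) /
              (Nat.factorial 1 : ℝ) ^ (Fintype.card G)) ^ (d - 2)) = fun _ => 1 := by
          funext d
          rw [hper d, hρ]
          simp
        rw [hfun]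
        exact tendsto_const_nhds
      · have hper0 : ∀ d, perkG (SdG G d) k = 0 := by
          intro d
          rw [perkG]
          have hset : {K : Multiset (Fin d → G) | K.Nodup ∧ IsKMultiplexG (SdG G d) k K}
              = (∅ : Set (Multiset (Fin d → G))) := by
            rw [Set.eq_empty_iff_forall_notMem]
            rintro K ⟨hnd, hK⟩
            have hcard : Multiset.card K = k := by
              rw [hK.1, hn1', mul_one]
            have h2 : 2 ≤ Multiset.card K := by
              rw [hcard]
              omega
            have hKne : K ≠ 0 := by
              intro h0
              rw [h0] at h2
              simp at h2
            obtain ⟨a, ha⟩ := Multiset.exists_mem_of_ne_zero hKne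
            have hall : K.count a = Multiset.card K := by
              apply Multiset.count_eq_card.2
              intro b _
              exact Subsingleton.elim _ _
            have hle := Multiset.nodup_iff_count_le_one.1 hnd a
            omega
          rw [hset, Set.ncard_empty]
        have hempty : {d : ℕ | perkG (SdG G d) k ≠ 0} = ∅ := by
          ext d
          simp [hper0]
        rw [hempty, Filter.principal_empty, inf_bot_eq]
        exact tendsto_bot
  · -- main case: |G| ≥ 2
    have hN2 : 2 ≤ k * Fintype.card G := by
      calc 2 = 1 * 2 := by norm_num
      _ ≤ k * Fintype.card G := Nat.mul_le_mul hk hn2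
    have hRne : (Reg G k).Nonempty := Reg_nonempty hk
    have hRsym : ∀ s ∈ Reg G k, s⁻¹ ∈ Reg G k := fun s hs => Reg_symm hs
    obtain ⟨L, hLpos, hLtend⟩ := walk_limit (Reg G k) hRne hRsym
    have hrpos : (0:ℝ) < ((Reg G k).card : ℝ) := by
      exact_mod_cast Finset.card_pos.2 hRne
    have hNfpos : (0:ℝ) < ((k * Fintype.card G).factorial : ℝ) := by
      exact_mod_cast Nat.factorial_pos _
    have hfact : (((k * Fintype.card G).factorial : ℝ)
        / (k.factorial : ℝ) ^ (Fintype.card G)) = ((Reg G k).card : ℝ) := by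
      have h1 := Reg_card (G := G) (k := k)
      have hkf : ((k.factorial : ℝ) ^ (Fintype.card G)) ≠ 0 := by positivity
      rw [div_eq_iff hkf]
      exact_mod_cast h1.symm
    have hr12lt : (Reg12 G k hN2).card < (Reg G k).card := Reg12_lt hk hn2 hN2
    -- quantitative sandwich
    have hbound : ∀ d : ℕ,
        |(PerkG (SdG G d) k : ℝ)
            - (pc (Reg G k) d 1 : ℝ) / ((k * Fintype.card G).factorial : ℝ)|
          ≤ ((Reg12 G k hN2).card : ℝ) ^ d
        ∧ |(perkG (SdG G d) k : ℝ)
            - (pc (Reg G k) d 1 : ℝ) / ((k * Fintype.card G).factorial : ℝ)|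
          ≤ ((Reg12 G k hN2).card : ℝ) ^ d := by
      intro d
      have h1 : ((Rws (G := G) (k := k) d).card : ℝ)
          ≤ ((k * Fintype.card G).factorial : ℝ) * (PerkG (SdG G d) k : ℝ) := by
        rw [PerkG_eq]
        exact_mod_cast T_le_Per (d := d)
      have h2 : (perkG (SdG G d) k : ℝ) * ((k * Fintype.card G).factorial : ℝ)
          ≤ ((Rws (G := G) (k := k) d).card : ℝ) := by
        rw [perkG_eq]
        exact_mod_cast per_le_T (d := d)
      have h3 : perkG (SdG G d) k
            + ((((Rws (G := G) (k := k) d)).image (rowsOf d)).filter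
                (fun K => ¬ K.Nodup)).card
          = PerkG (SdG G d) k := by
        rw [perkG_eq, PerkG_eq]
        exact Finset.card_filter_add_card_filter_not _
      have h4 : (((((Rws (G := G) (k := k) d)).image (rowsOf d)).filter
            (fun K => ¬ K.Nodup)).card : ℝ)
          ≤ ((Reg12 G k hN2).card : ℝ) ^ d := by
        exact_mod_cast rep_le (d := d) hN2
      have h3' : (perkG (SdG G d) k : ℝ)
            + (((((Rws (G := G) (k := k) d)).image (rowsOf d)).filter
                (fun K => ¬ K.Nodup)).card : ℝ)
          = (PerkG (SdG G d) k : ℝ) := by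
        exact_mod_cast h3
      have hT : ((Rws (G := G) (k := k) d).card : ℝ) = (pc (Reg G k) d 1 : ℝ) := by
        exact_mod_cast Rws_card_eq (G := G) (k := k) d
      rw [← hT]
      have hub : (perkG (SdG G d) k : ℝ)
          ≤ ((Rws (G := G) (k := k) d).card : ℝ)
            / ((k * Fintype.card G).factorial : ℝ) := by
        rw [le_div_iff₀ hNfpos]
        exact h2
      have hlb : ((Rws (G := G) (k := k) d).card : ℝ)
            / ((k * Fintype.card G).factorial : ℝ)
          ≤ (PerkG (SdG G d) k : ℝ) := by
        rw [div_le_iff₀ hNfpos]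
        calc ((Rws (G := G) (k := k) d).card : ℝ)
            ≤ ((k * Fintype.card G).factorial : ℝ) * (PerkG (SdG G d) k : ℝ) := h1
          _ = (PerkG (SdG G d) k : ℝ) * ((k * Fintype.card G).factorial : ℝ) := by ring
      constructor
      · rw [abs_le]
        constructor
        · linarith
        · linarith
      · rw [abs_le]
        constructor
        · linarith
        · linarith
    -- the generic convergence step
    have key : ∀ F : ℕ → ℕ,
        (∀ d : ℕ, |(F d : ℝ)
            - (pc (Reg G k) d 1 : ℝ) / ((k * Fintype.card G).factorial : ℝ)|
          ≤ ((Reg12 G k hN2).card : ℝ) ^ d) →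
        Tendsto (fun d : ℕ => (F d : ℝ) / ((Reg G k).card : ℝ) ^ (d - 2))
          (atTop ⊓ 𝓟 {d : ℕ | pc (Reg G k) d 1 ≠ 0})
          (nhds (((Reg G k).card : ℝ) ^ 2 / ((k * Fintype.card G).factorial : ℝ) * L)) := by
      intro F hF
      have herr : Tendsto (fun d : ℕ => (F d : ℝ) / ((Reg G k).card : ℝ) ^ (d - 2)
          - (((Reg G k).card : ℝ) ^ 2 / ((k * Fintype.card G).factorial : ℝ))
            * ((pc (Reg G k) d 1 : ℝ) / ((Reg G k).card : ℝ) ^ d))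
          atTop (nhds 0) := by
        apply squeeze_zero_norm'
        · show ∀ᶠ d : ℕ in atTop,
            ‖(F d : ℝ) / ((Reg G k).card : ℝ) ^ (d - 2)
              - (((Reg G k).card : ℝ) ^ 2 / ((k * Fintype.card G).factorial : ℝ))
                * ((pc (Reg G k) d 1 : ℝ) / ((Reg G k).card : ℝ) ^ d)‖
            ≤ ((Reg G k).card : ℝ) ^ 2
              * (((Reg12 G k hN2).card : ℝ) / ((Reg G k).card : ℝ)) ^ d
          filter_upwards [Filter.eventually_ge_atTop 2] with d hd
          have h9 : ((Reg G k).card : ℝ) ^ d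
              = ((Reg G k).card : ℝ) ^ (d - 2) * ((Reg G k).card : ℝ) ^ 2 := by
            rw [← pow_add]
            congr 1
            omega
          have hstep : ∀ A : ℝ, A / ((Reg G k).card : ℝ) ^ (d - 2)
              = A * (((Reg G k).card : ℝ) ^ 2 / ((Reg G k).card : ℝ) ^ d) := by
            intro A
            rw [h9]
            field_simp
          have hdiff : (F d : ℝ) / ((Reg G k).card : ℝ) ^ (d - 2)
              - (((Reg G k).card : ℝ) ^ 2 / ((k * Fintype.card G).factorial : ℝ))
                * ((pc (Reg G k) d 1 : ℝ) / ((Reg G k).card : ℝ) ^ d)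
              = ((F d : ℝ)
                  - (pc (Reg G k) d 1 : ℝ) / ((k * Fintype.card G).factorial : ℝ))
                * (((Reg G k).card : ℝ) ^ 2 / ((Reg G k).card : ℝ) ^ d) := by
            rw [hstep]
            ring
          rw [Real.norm_eq_abs, hdiff, abs_mul]
          have hq : |((Reg G k).card : ℝ) ^ 2 / ((Reg G k).card : ℝ) ^ d|
              = ((Reg G k).card : ℝ) ^ 2 / ((Reg G k).card : ℝ) ^ d := by
            apply abs_of_pos
            positivity
          rw [hq]
          calc |(F d : ℝ) - (pc (Reg G k) d 1 : ℝ)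
                / ((k * Fintype.card G).factorial : ℝ)|
              * (((Reg G k).card : ℝ) ^ 2 / ((Reg G k).card : ℝ) ^ d)
              ≤ ((Reg12 G k hN2).card : ℝ) ^ d
                * (((Reg G k).card : ℝ) ^ 2 / ((Reg G k).card : ℝ) ^ d) := by
                apply mul_le_mul_of_nonneg_right (hF d)
                positivity
            _ = ((Reg G k).card : ℝ) ^ 2
                * (((Reg12 G k hN2).card : ℝ) / ((Reg G k).card : ℝ)) ^ d := by
                rw [div_pow]
                ring
        · have h0 : Tendsto
              (fun d : ℕ => (((Reg12 G k hN2).card : ℝ) / ((Reg G k).card : ℝ)) ^ d)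
              atTop (nhds 0) := by
            apply tendsto_pow_atTop_nhds_zero_of_abs_lt_one
            rw [abs_of_nonneg (by positivity)]
            rw [div_lt_one hrpos]
            exact_mod_cast hr12lt
          simpa using h0.const_mul (((Reg G k).card : ℝ) ^ 2)
      have hmain : Tendsto (fun d : ℕ =>
          (((Reg G k).card : ℝ) ^ 2 / ((k * Fintype.card G).factorial : ℝ))
            * ((pc (Reg G k) d 1 : ℝ) / ((Reg G k).card : ℝ) ^ d))
          (atTop ⊓ 𝓟 {d : ℕ | pc (Reg G k) d 1 ≠ 0})
          (nhds (((Reg G k).card : ℝ) ^ 2 / ((k * Fintype.card G).factorial : ℝ) * L)) :=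
        hLtend.const_mul _
      have hsum := hmain.add (herr.mono_left inf_le_left)
      have hfe : (fun d : ℕ => (F d : ℝ) / ((Reg G k).card : ℝ) ^ (d - 2))
          = fun d : ℕ =>
            (((Reg G k).card : ℝ) ^ 2 / ((k * Fintype.card G).factorial : ℝ))
              * ((pc (Reg G k) d 1 : ℝ) / ((Reg G k).card : ℝ) ^ d)
            + ((F d : ℝ) / ((Reg G k).card : ℝ) ^ (d - 2)
              - (((Reg G k).card : ℝ) ^ 2 / ((k * Fintype.card G).factorial : ℝ))
                * ((pc (Reg G k) d 1 : ℝ) / ((Reg G k).card : ℝ) ^ d)) := by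
        funext d
        ring
      rw [hfe]
      simpa using hsum
    -- identify the nonvanishing sets
    have hsetPer : {d : ℕ | PerkG (SdG G d) k ≠ 0} = {d : ℕ | pc (Reg G k) d 1 ≠ 0} := by
      ext d
      simp only [Set.mem_setOf_eq]
      have hiff : PerkG (SdG G d) k = 0 ↔ pc (Reg G k) d 1 = 0 := by
        rw [PerkG_eq, Finset.card_eq_zero, Finset.image_eq_empty,
          ← Finset.card_eq_zero, Rws_card_eq]
      exact not_congr hiff
    have hsubper : {d : ℕ | perkG (SdG G d) k ≠ 0} ⊆ {d : ℕ | pc (Reg G k) d 1 ≠ 0} := by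
      intro d hd
      rw [Set.mem_setOf_eq] at hd ⊢
      intro hpc
      apply hd
      rw [perkG_eq, Finset.card_eq_zero]
      have himg : ((Rws (G := G) (k := k) d)).image (rowsOf d) = ∅ := by
        rw [Finset.image_eq_empty, ← Finset.card_eq_zero, Rws_card_eq]
        exact hpc
      rw [himg]
      exact Finset.filter_empty _
    refine ⟨((Reg G k).card : ℝ) ^ 2 / ((k * Fintype.card G).factorial : ℝ) * L,
      by positivity, ?_, ?_⟩
    · simp only [hfact]
      rw [hsetPer]
      exact key (fun d => PerkG (SdG G d) k) (fun d => (hbound d).1)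
    · simp only [hfact]
      have hle : (atTop ⊓ 𝓟 {d : ℕ | perkG (SdG G d) k ≠ 0})
          ≤ (atTop ⊓ 𝓟 {d : ℕ | pc (Reg G k) d 1 ≠ 0}) :=
        inf_le_inf_left _ (Filter.principal_mono.2 hsubper)
      exact (key (fun d => perkG (SdG G d) k) (fun d => (hbound d).2)).mono_left hle
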